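/- arXiv:math-ph/0208026 — 2 statements merged into one kernel-verified Lean document; each statement's English description precedes it below -/
import Mathlib

section
/- Let $\Lambda = \{1,\dots,N\}$ with periodic bonds. For $X \subseteq \Lambda$ define $w_N(X)$ as the minimum cardinality of a connected set $C$ of bonds (connected in the sense that bonds sharing an endpoint or at distance 1 are adjacent) that covers $X$ and contains at least one endpoint of the bond $\langle N, 1\rangle$. Then for any sets $Y, Z \subseteq \Lambda$ and any site $j$ with $j :: Z$ (exactly one of $j,j+1$ in $Z$ if $j\ne N$; both or neither of $N,1$ in $Z$ if $j=N$), one has $w_N((Y+j) \triangle Z) \le w_N(Y) + w_N(Z)$. -/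
open scoped Classical symmDiff

/-- Bonds of the cyclic lattice are indexed by their left endpoint: `j` stands for `⟨j, j+1⟩`.
Two bonds are connected iff they share an endpoint or are at distance 1. -/
def bondAdj (N : ℕ) (p q : ZMod N) : Prop :=
  q = p ∨ q = p + 1 ∨ q = p + 2 ∨ p = q + 1 ∨ p = q + 2

/-- A set of bonds is connected if any two of its bonds are joined by a chain of
pairwise-connected bonds inside the set. -/
def connectedIn (N : ℕ) (C : Finset (ZMod N)) : Prop :=
  ∀ p ∈ C, ∀ q ∈ C, Relation.ReflTransGen (fun a b => a ∈ C ∧ b ∈ C ∧ bondAdj N a b) p q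

/-- `C` covers `X`: every site of `X` is an endpoint of some bond of `C`. -/
def covers (N : ℕ) (C : Finset (ZMod N)) (X : Finset (ZMod N)) : Prop :=
  ∀ x ∈ X, ∃ j ∈ C, x = j ∨ x = j + 1

/-- `C` intersects the bond `⟨N, 1⟩` (site `N` is `0` in `ZMod N`). -/
def touches (N : ℕ) (C : Finset (ZMod N)) : Prop :=
  ∃ j ∈ C, j = 0 ∨ j + 1 = 0 ∨ j = 1 ∨ j + 1 = 1

/-- `w_N(X)`: minimal cardinality of a connected bond set covering `X` and
intersecting the bond `⟨N,1⟩`. -/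
noncomputable def wN (N : ℕ) (X : Finset (ZMod N)) : ℕ∞ :=
  sInf {c : ℕ∞ | ∃ C : Finset (ZMod N),
    connectedIn N C ∧ covers N C X ∧ touches N C ∧ (C.card : ℕ∞) = c}

/-- `j : X` : the bond `⟨j, j+1⟩` has exactly one endpoint in `X`. -/
def bdry (N : ℕ) (X : Finset (ZMod N)) (j : ZMod N) : Prop :=
  (j ∈ X ∧ j + 1 ∉ X) ∨ (j + 1 ∈ X ∧ j ∉ X)

/-- `j :: X` : for `j ≠ N` this means `j : X`; for `j = N` (i.e. `j = 0`) it means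
both or neither of `N, 1` lie in `X`. -/
def dbdry (N : ℕ) (X : Finset (ZMod N)) (j : ZMod N) : Prop :=
  if j = 0 then ¬ bdry N X j else bdry N X j

-- auxiliary lemmas

lemma connectedIn_mono {N : ℕ} {A B : Finset (ZMod N)} (hAB : A ⊆ B)
    {p q : ZMod N}
    (h : Relation.ReflTransGen (fun a b => a ∈ A ∧ b ∈ A ∧ bondAdj N a b) p q) :
    Relation.ReflTransGen (fun a b => a ∈ B ∧ b ∈ B ∧ bondAdj N a b) p q := by
  exact Relation.ReflTransGen.mono (r := fun a b => a ∈ A ∧ b ∈ A ∧ bondAdj N a b)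
    (p := fun a b => a ∈ B ∧ b ∈ B ∧ bondAdj N a b)
    (fun a b hab => ⟨hAB hab.1, hAB hab.2.1, hab.2.2⟩) _ _ h

lemma connectedIn_union {N : ℕ} {A B : Finset (ZMod N)}
    (hA : connectedIn N A) (hB : connectedIn N B)
    {a b : ZMod N} (ha : a ∈ A) (hb : b ∈ B) (hadj : bondAdj N a b) :
    connectedIn N (A ∪ B) := by
  have hAu : A ⊆ A ∪ B := Finset.subset_union_left
  have hBu : B ⊆ A ∪ B := Finset.subset_union_right
  have hadj' : bondAdj N b a := by
    unfold bondAdj at *; tauto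
  have key : ∀ p ∈ A ∪ B, Relation.ReflTransGen
      (fun x y => x ∈ A ∪ B ∧ y ∈ A ∪ B ∧ bondAdj N x y) p a := by
    intro p hp
    rcases Finset.mem_union.1 hp with hpA | hpB
    · exact connectedIn_mono hAu (hA p hpA a ha)
    · have : Relation.ReflTransGen
          (fun x y => x ∈ A ∪ B ∧ y ∈ A ∪ B ∧ bondAdj N x y) p b :=
        connectedIn_mono hBu (hB p hpB b hb)
      exact this.tail ⟨hBu hb, hAu ha, hadj'⟩
  have key' : ∀ p ∈ A ∪ B, Relation.ReflTransGen
      (fun x y => x ∈ A ∪ B ∧ y ∈ A ∪ B ∧ bondAdj N x y) a p := by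
    intro p hp
    rcases Finset.mem_union.1 hp with hpA | hpB
    · exact connectedIn_mono hAu (hA a ha p hpA)
    · have : Relation.ReflTransGen
          (fun x y => x ∈ A ∪ B ∧ y ∈ A ∪ B ∧ bondAdj N x y) b p :=
        connectedIn_mono hBu (hB b hb p hpB)
      exact (Relation.ReflTransGen.single ⟨hAu ha, hBu hb, hadj⟩).trans this
  intro p hp q hq
  exact (key p hp).trans (key' q hq)

lemma wN_witness {N : ℕ} {X : Finset (ZMod N)} (h : wN N X ≠ ⊤) :
    ∃ C : Finset (ZMod N), connectedIn N C ∧ covers N C X ∧ touches N C ∧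
      (C.card : ℕ∞) = wN N X := by
  have hne : {c : ℕ∞ | ∃ C : Finset (ZMod N),
      connectedIn N C ∧ covers N C X ∧ touches N C ∧ (C.card : ℕ∞) = c}.Nonempty := by
    by_contra hc
    rw [Set.not_nonempty_iff_eq_empty] at hc
    exact h (by simp [wN, hc])
  have := csInf_mem hne
  exact this

lemma wN_le {N : ℕ} {X : Finset (ZMod N)} {C : Finset (ZMod N)}
    (h1 : connectedIn N C) (h2 : covers N C X) (h3 : touches N C) :
    wN N X ≤ (C.card : ℕ∞) :=
  sInf_le ⟨C, h1, h2, h3, rfl⟩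

theorem stmt_7 (N : ℕ) [NeZero N] (Y Z : Finset (ZMod N)) (j : ZMod N)
    (hj : dbdry N Z j) :
    wN N ((Y.image (· + j)) ∆ Z) ≤ wN N Y + wN N Z := by
  by_cases hY : wN N Y = ⊤
  · simp [hY]
  by_cases hZ : wN N Z = ⊤
  · simp [hZ]
  obtain ⟨A, hAc, hAcov, hAt, hAcard⟩ := wN_witness hY
  obtain ⟨B, hBc, hBcov, hBt, hBcard⟩ := wN_witness hZ
  -- translated A
  set A' : Finset (ZMod N) := A.image (· + j) with hA'
  have hA'c : connectedIn N A' := by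
    intro p hp q hq
    simp only [hA', Finset.mem_image] at hp hq
    obtain ⟨p0, hp0, rfl⟩ := hp
    obtain ⟨q0, hq0, rfl⟩ := hq
    have := hAc p0 hp0 q0 hq0
    refine Relation.ReflTransGen.lift (· + j) ?_ _ _ this
    intro a b hab
    simp only [Function.onFun]
    refine ⟨Finset.mem_image_of_mem _ hab.1, Finset.mem_image_of_mem _ hab.2.1, ?_⟩
    have h3 := hab.2.2
    unfold bondAdj at h3 ⊢
    rcases h3 with h|h|h|h|h
    · left; rw [h]
    · right; left; rw [h]; ring
    · right; right; left; rw [h]; ring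
    · right; right; right; left; rw [h]; ring
    · right; right; right; right; rw [h]; ring
  have hA'cov : covers N A' (Y.image (· + j)) := by
    intro x hx
    simp only [Finset.mem_image] at hx
    obtain ⟨y, hy, rfl⟩ := hx
    obtain ⟨p, hp, hpy⟩ := hAcov y hy
    refine ⟨p + j, Finset.mem_image_of_mem _ hp, ?_⟩
    rcases hpy with h | h
    · left; rw [h]
    · right; rw [h]; ring
  -- anchors
  obtain ⟨a0, ha0A, ha0⟩ := hAt
  obtain ⟨b0, hb0B, hb0⟩ := hBt
  -- a0 ∈ {0, -1, 1}
  have ha0' : a0 = 0 ∨ a0 = -1 ∨ a0 = 1 := by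
    rcases ha0 with h|h|h|h
    · exact Or.inl h
    · right; left; linear_combination h
    · right; right; exact h
    · left; linear_combination h
  -- find bridging bond b1 ∈ B near j when j ≠ 0, else use b0
  have hbridge : ∃ b1 ∈ B, bondAdj N (a0 + j) b1 := by
    by_cases hj0 : j = 0
    · refine ⟨b0, hb0B, ?_⟩
      have hb0' : b0 = 0 ∨ b0 = -1 ∨ b0 = 1 := by
        rcases hb0 with h|h|h|h
        · exact Or.inl h
        · right; left; linear_combination h
        · right; right; exact h
        · left; linear_combination h
      subst hj0
      unfold bondAdj
      rcases ha0' with rfl|rfl|rfl <;> rcases hb0' with rfl|rfl|rfl <;>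
        simp <;> ring_nf <;> tauto
    · -- bdry N Z j holds
      have hbd : bdry N Z j := by simpa [dbdry, hj0] using hj
      have hz : j ∈ Z ∨ j + 1 ∈ Z := by
        rcases hbd with ⟨h, _⟩ | ⟨h, _⟩
        · exact Or.inl h
        · exact Or.inr h
      rcases hz with hz | hz
      · obtain ⟨q, hqB, hq⟩ := hBcov j hz
        refine ⟨q, hqB, ?_⟩
        -- q = j or q = j - 1
        unfold bondAdj
        rcases ha0' with rfl|rfl|rfl <;> rcases hq with h|h <;>
          [skip; skip; skip; skip; skip; skip] <;> first
          | (left; linear_combination -h)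
          | (right; left; linear_combination -h)
          | (right; right; left; linear_combination -h)
          | (right; right; right; left; linear_combination h)
          | (right; right; right; right; linear_combination h)
      · obtain ⟨q, hqB, hq⟩ := hBcov (j + 1) hz
        refine ⟨q, hqB, ?_⟩
        unfold bondAdj
        rcases ha0' with rfl|rfl|rfl <;> rcases hq with h|h <;> first
          | (left; linear_combination -h)
          | (right; left; linear_combination -h)
          | (right; right; left; linear_combination -h)
          | (right; right; right; left; linear_combination h)
          | (right; right; right; right; linear_combination h)
  obtain ⟨b1, hb1B, hadj⟩ := hbridge
  have ha0A' : a0 + j ∈ A' := Finset.mem_image_of_mem _ ha0A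
  set C : Finset (ZMod N) := A' ∪ B with hC
  have hCc : connectedIn N C := connectedIn_union hA'c hBc ha0A' hb1B hadj
  have hCcov : covers N C ((Y.image (· + j)) ∆ Z) := by
    intro x hx
    have hx' : x ∈ Y.image (· + j) ∨ x ∈ Z := by
      rcases Finset.mem_symmDiff.1 hx with ⟨h, _⟩ | ⟨h, _⟩
      · exact Or.inl h
      · exact Or.inr h
    rcases hx' with h | h
    · obtain ⟨p, hp, hpx⟩ := hA'cov x h
      exact ⟨p, Finset.mem_union_left _ hp, hpx⟩
    · obtain ⟨p, hp, hpx⟩ := hBcov x h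
      exact ⟨p, Finset.mem_union_right _ hp, hpx⟩
  have hCt : touches N C := ⟨b0, Finset.mem_union_right _ hb0B, hb0⟩
  calc wN N ((Y.image (· + j)) ∆ Z) ≤ (C.card : ℕ∞) := wN_le hCc hCcov hCt
    _ ≤ ((A'.card + B.card : ℕ) : ℕ∞) := by
        exact_mod_cast Nat.cast_le.2 (Finset.card_union_le _ _)
    _ = (A'.card : ℕ∞) + (B.card : ℕ∞) := by push_cast; rfl
    _ ≤ wN N Y + wN N Z := by
        rw [← hAcard, ← hBcard]
        have : A'.card = A.card := Finset.card_image_of_injective _ (add_left_injective j)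
        rw [this]
end

section
/- Let $\Lambda = \mathbb{Z}/N\mathbb{Z}$ with $N$ odd, $T X = \{1\}\triangle(X+1)$, and let $w_N$ be as above (minimum size of a connected bond set covering $X$ and intersecting bond $\langle N,1\rangle$). Then for any $X \subseteq \Lambda$ and any integer $s$, $w_N(T^s X) \le w_N(X) + w_N(T^s\emptyset)$. -/
open scoped Classical symmDiff

/-- The generalized translation `T X = {1} ∆ (X + 1)`. -/
noncomputable def T (N : ℕ) (X : Finset (ZMod N)) : Finset (ZMod N) :=
  ({1} : Finset (ZMod N)) ∆ (X.image (· + 1))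

/-! ### Auxiliary lemmas -/

lemma mem_T_aux (N : ℕ) (X : Finset (ZMod N)) (x : ZMod N) :
    x ∈ T N X ↔ Xor' (x = 1) (x - 1 ∈ X) := by
  have himg : x ∈ X.image (· + 1) ↔ x - 1 ∈ X := by
    simp only [Finset.mem_image]
    constructor
    · rintro ⟨y, hy, rfl⟩; simpa using hy
    · intro h; exact ⟨x - 1, h, by ring⟩
  simp only [T, Finset.mem_symmDiff, Finset.mem_singleton, himg, Xor', Xor]

lemma mem_T_iter (N : ℕ) (X : Finset (ZMod N)) (s : ℕ) (x : ZMod N) :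
    x ∈ (T N)^[s] X ↔ Xor' ((x - (s : ZMod N)) ∈ X) (x ∈ (T N)^[s] (∅ : Finset (ZMod N))) := by
  induction s generalizing x with
  | zero => simp [Xor', Xor]
  | succ n ih =>
    rw [Function.iterate_succ_apply', Function.iterate_succ_apply', mem_T_aux, mem_T_aux]
    rw [ih (x - 1)]
    have hc : x - 1 - (n : ZMod N) = x - ((n : ℕ) + 1 : ℕ) := by push_cast; ring
    rw [hc]
    unfold Xor' Xor
    tauto

lemma xor_helper1 (A B C P Q : Prop) (hA : A) (hB : B) (hC : C) (hPQ : P ↔ Q) :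
    Xor' (Xor' A P) (Xor' B Q) ↔ ¬C := by
  unfold Xor' Xor; tauto

lemma xor_helper2 (A B P Q : Prop) (hAB : ¬(A ∧ B)) (hPQ : Xor' P Q ↔ ¬A) :
    Xor' (Xor' A P) (Xor' B Q) ↔ ¬B := by
  unfold Xor' Xor at *; tauto

lemma dbdry_T_iter (N : ℕ) [NeZero N] (s : ℕ) :
    Xor' ((s : ZMod N) ∈ (T N)^[s] (∅ : Finset (ZMod N)))
      (((s : ZMod N) + 1) ∈ (T N)^[s] (∅ : Finset (ZMod N))) ↔ (s : ZMod N) ≠ 0 := by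
  induction s with
  | zero => simp [Xor']
  | succ n ih =>
    rw [Function.iterate_succ_apply', mem_T_aux, mem_T_aux]
    have e1 : ((n + 1 : ℕ) : ZMod N) = (n : ZMod N) + 1 := by push_cast; ring
    rw [e1]
    have e2 : (n : ZMod N) + 1 - 1 = (n : ZMod N) := by ring
    have e3 : (n : ZMod N) + 1 + 1 - 1 = (n : ZMod N) + 1 := by ring
    rw [e2, e3]
    by_cases h10 : (1 : ZMod N) = 0
    · have hN1 : N = 1 := by
        have hd : N ∣ 1 := by
          have : ((1 : ℕ) : ZMod N) = 0 := by exact_mod_cast h10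
          exact (ZMod.natCast_eq_zero_iff 1 N).1 this
        exact Nat.dvd_one.mp hd
      subst hN1
      have hMM : ((n : ZMod 1) ∈ (T 1)^[n] (∅ : Finset (ZMod 1))) ↔
          ((n : ZMod 1) + 1 ∈ (T 1)^[n] (∅ : Finset (ZMod 1))) :=
        iff_of_eq (congrArg (fun x => x ∈ (T 1)^[n] (∅ : Finset (ZMod 1)))
          (Subsingleton.elim _ _))
      exact xor_helper1 _ _ _ _ _ (Subsingleton.elim _ _) (Subsingleton.elim _ _)
        (Subsingleton.elim _ _) hMM
    · have hA : ((n : ZMod N) + 1 = 1) ↔ (n : ZMod N) = 0 := by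
        constructor
        · intro h
          have : (n : ZMod N) + 1 - 1 = 1 - 1 := by rw [h]
          simpa using this
        · intro h; rw [h, zero_add]
      have hB : ((n : ZMod N) + 1 + 1 = 1) ↔ (n : ZMod N) + 1 = 0 := by
        constructor
        · intro h
          have : (n : ZMod N) + 1 + 1 - 1 = 1 - 1 := by rw [h]
          simpa using this
        · intro h; rw [h, zero_add]
      rw [hA, hB]
      have hAB : ¬(((n : ZMod N) = 0) ∧ ((n : ZMod N) + 1 = 0)) := by
        rintro ⟨ha, hb⟩
        rw [ha, zero_add] at hb
        exact h10 hb
      exact xor_helper2 _ _ _ _ hAB ih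

lemma bondAdj_symm (N : ℕ) {p q : ZMod N} (h : bondAdj N p q) : bondAdj N q p := by
  unfold bondAdj at *; tauto

lemma bondAdj_shift (N : ℕ) (t : ZMod N) {p q : ZMod N} (h : bondAdj N p q) :
    bondAdj N (p + t) (q + t) := by
  unfold bondAdj at *
  rcases h with h | h | h | h | h <;> subst h
  · exact Or.inl rfl
  · exact Or.inr (Or.inl (by ring))
  · exact Or.inr (Or.inr (Or.inl (by ring)))
  · exact Or.inr (Or.inr (Or.inr (Or.inl (by ring))))
  · exact Or.inr (Or.inr (Or.inr (Or.inr (by ring))))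

/-- Two bonds both within distance one of `t` are adjacent. -/
lemma near_adj (N : ℕ) {t a b : ZMod N}
    (ha : a = t - 1 ∨ a = t ∨ a = t + 1) (hb : b = t - 1 ∨ b = t ∨ b = t + 1) :
    bondAdj N a b := by
  unfold bondAdj
  rcases ha with rfl | rfl | rfl <;> rcases hb with rfl | rfl | rfl <;>
    first
      | (left; ring1)
      | (right; left; ring1)
      | (right; right; left; ring1)
      | (right; right; right; left; ring1)
      | (right; right; right; right; ring1)

theorem stmt_8 (N : ℕ) [NeZero N] (hN : Odd N) (X : Finset (ZMod N)) (s : ℕ) :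
    wN N ((T N)^[s] X) ≤ wN N X + wN N ((T N)^[s] ∅) := by
  set S1 := {c : ℕ∞ | ∃ C : Finset (ZMod N),
    connectedIn N C ∧ covers N C X ∧ touches N C ∧ (C.card : ℕ∞) = c} with hS1
  set S2 := {c : ℕ∞ | ∃ C : Finset (ZMod N),
    connectedIn N C ∧ covers N C ((T N)^[s] ∅) ∧ touches N C ∧ (C.card : ℕ∞) = c} with hS2
  rcases S1.eq_empty_or_nonempty with h1 | h1
  · have : wN N X = ⊤ := by rw [wN, ← hS1, h1, sInf_empty]
    rw [this, top_add]; exact le_top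
  rcases S2.eq_empty_or_nonempty with h2 | h2
  · have : wN N ((T N)^[s] ∅) = ⊤ := by rw [wN, ← hS2, h2, sInf_empty]
    rw [this, add_top]; exact le_top
  obtain ⟨C1, hC1conn, hC1cov, hC1t, hC1card⟩ := csInf_mem h1
  obtain ⟨C2, hC2conn, hC2cov, hC2t, hC2card⟩ := csInf_mem h2
  set t : ZMod N := (s : ZMod N) with ht
  set D : Finset (ZMod N) := C1.image (· + t) ∪ C2 with hD
  -- a bond of C1 (shifted) near t
  obtain ⟨j0, hj0C, hj0⟩ := hC1t
  have hj0near : j0 + t = t - 1 ∨ j0 + t = t ∨ j0 + t = t + 1 := by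
    rcases hj0 with h | h | h | h
    · right; left; rw [h, zero_add]
    · left; have : j0 = -1 := by linear_combination h
      rw [this]; ring
    · right; right; rw [h]; ring
    · right; left
      have : j0 = 0 := by linear_combination h
      rw [this, zero_add]
  -- a bond of C2 near t
  have hj2ex : ∃ j2 ∈ C2, j2 = t - 1 ∨ j2 = t ∨ j2 = t + 1 := by
    by_cases hs0 : t = 0
    · obtain ⟨j2, hj2C, hj2⟩ := hC2t
      refine ⟨j2, hj2C, ?_⟩
      rcases hj2 with h | h | h | h
      · right; left; rw [h, hs0]
      · left; rw [hs0]; linear_combination h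
      · right; right; rw [h, hs0, zero_add]
      · right; left; rw [hs0]; linear_combination h
    · have hxor := (dbdry_T_iter N s).2 hs0
      have hmem : (t ∈ (T N)^[s] (∅ : Finset (ZMod N))) ∨
          (t + 1 ∈ (T N)^[s] (∅ : Finset (ZMod N))) := by
        rcases hxor with ⟨h, _⟩ | ⟨h, _⟩
        · exact Or.inl h
        · exact Or.inr h
      rcases hmem with hm | hm
      · obtain ⟨j2, hj2C, hj2⟩ := hC2cov t hm
        refine ⟨j2, hj2C, ?_⟩
        rcases hj2 with h | h
        · right; left; exact h.symm
        · left; linear_combination -h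
      · obtain ⟨j2, hj2C, hj2⟩ := hC2cov (t + 1) hm
        refine ⟨j2, hj2C, ?_⟩
        rcases hj2 with h | h
        · right; right; exact h.symm
        · right; left; linear_combination -h
  obtain ⟨j2, hj2C, hj2near⟩ := hj2ex
  have hj0D : j0 + t ∈ D := Finset.mem_union_left _ (Finset.mem_image_of_mem _ hj0C)
  have hj2D : j2 ∈ D := Finset.mem_union_right _ hj2C
  -- D is connected
  set R : ZMod N → ZMod N → Prop := fun a b => a ∈ D ∧ b ∈ D ∧ bondAdj N a b with hR
  have hRsymm : Symmetric R := by
    intro a b ⟨h1, h2, h3⟩; exact ⟨h2, h1, bondAdj_symm N h3⟩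
  have chain1 : ∀ p ∈ C1, ∀ q ∈ C1, Relation.ReflTransGen R (p + t) (q + t) := by
    intro p hp q hq
    refine (hC1conn p hp q hq).lift (· + t) ?_
    rintro a b ⟨ha, hb, hadj⟩
    exact ⟨Finset.mem_union_left _ (Finset.mem_image_of_mem _ ha),
      Finset.mem_union_left _ (Finset.mem_image_of_mem _ hb), bondAdj_shift N t hadj⟩
  have chain2 : ∀ p ∈ C2, ∀ q ∈ C2, Relation.ReflTransGen R p q := by
    intro p hp q hq
    refine Relation.ReflTransGen.mono ?_ _ _ (hC2conn p hp q hq)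
    rintro a b ⟨ha, hb, hadj⟩
    exact ⟨Finset.mem_union_right _ ha, Finset.mem_union_right _ hb, hadj⟩
  have bridge : Relation.ReflTransGen R (j0 + t) j2 :=
    Relation.ReflTransGen.single ⟨hj0D, hj2D, near_adj N hj0near hj2near⟩
  have hDconn : connectedIn N D := by
    intro p hp q hq
    have hcase : ∀ x ∈ D, Relation.ReflTransGen R x j2 := by
      intro x hx
      rcases Finset.mem_union.1 hx with hx1 | hx2
      · obtain ⟨a, ha, rfl⟩ := Finset.mem_image.1 hx1
        exact (chain1 a ha j0 hj0C).trans bridge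
      · exact chain2 x hx2 j2 hj2C
    exact (hcase p hp).trans (haveI : Std.Symm R := ⟨fun _ _ h => hRsymm h⟩; Std.Symm.symm _ _ (hcase q hq))
  -- D covers T^s X
  have hDcov : covers N D ((T N)^[s] X) := by
    intro x hx
    rcases (mem_T_iter N X s x).1 hx with ⟨hmem, _⟩ | ⟨hmem, _⟩
    · obtain ⟨j, hjC, hj⟩ := hC1cov (x - t) hmem
      refine ⟨j + t, Finset.mem_union_left _ (Finset.mem_image_of_mem _ hjC), ?_⟩
      rcases hj with h | h
      · left; linear_combination h
      · right; linear_combination h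
    · obtain ⟨j, hjC, hj⟩ := hC2cov x hmem
      exact ⟨j, Finset.mem_union_right _ hjC, hj⟩
  -- D touches
  have hDt : touches N D := by
    obtain ⟨j, hj, h⟩ := hC2t
    exact ⟨j, Finset.mem_union_right _ hj, h⟩
  -- conclude
  have hmemS : ((D.card : ℕ∞)) ∈ {c : ℕ∞ | ∃ C : Finset (ZMod N),
      connectedIn N C ∧ covers N C ((T N)^[s] X) ∧ touches N C ∧ (C.card : ℕ∞) = c} :=
    ⟨D, hDconn, hDcov, hDt, rfl⟩
  have hle : wN N ((T N)^[s] X) ≤ (D.card : ℕ∞) := sInf_le hmemS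
  refine hle.trans ?_
  have hcard : D.card ≤ C1.card + C2.card :=
    le_trans (Finset.card_union_le _ _) (by
      have := Finset.card_image_le (s := C1) (f := (· + t))
      omega)
  calc (D.card : ℕ∞) ≤ ((C1.card + C2.card : ℕ) : ℕ∞) := by exact_mod_cast hcard
    _ = (C1.card : ℕ∞) + (C2.card : ℕ∞) := by push_cast; rfl
    _ = wN N X + wN N ((T N)^[s] ∅) := by
        rw [wN, wN, ← hS1, ← hS2, hC1card, hC2card]
end
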